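/- Let M be an infinite matrix with no vanishing columns and p ≥ 1. Then the Banach space (ℓ^p_M, ‖·‖_{M,p}) is separable. -/

import Mathlib

open scoped ENNReal NNReal

noncomputable def eNorm (m : ℕ → ℕ → ℂ) (p : ℝ) (x : ℕ → ℂ) : ℝ≥0∞ :=
  (∑' n : ℕ, (∑' k : ℕ, (‖m n k‖₊ : ℝ≥0∞) * (‖x k‖₊ : ℝ≥0∞)) ^ p) ^ (1 / p)

set_option maxHeartbeats 1000000

open MeasureTheory Filter Topology

namespace Stmt2Aux

/-- The `n`-th row sum `∑ₖ |m n k| |x k|`. -/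
noncomputable def Fn (m : ℕ → ℕ → ℂ) (x : ℕ → ℂ) (n : ℕ) : ℝ≥0∞ :=
  ∑' k : ℕ, (‖m n k‖₊ : ℝ≥0∞) * (‖x k‖₊ : ℝ≥0∞)

lemma eNorm_def (m : ℕ → ℕ → ℂ) (p : ℝ) (x : ℕ → ℂ) :
    eNorm m p x = (∑' n : ℕ, Fn m x n ^ p) ^ (1 / p) := rfl

lemma Fn_mono {m : ℕ → ℕ → ℂ} {x y : ℕ → ℂ} (h : ∀ k, ‖x k‖₊ ≤ ‖y k‖₊) (n : ℕ) :
    Fn m x n ≤ Fn m y n :=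
  ENNReal.tsum_le_tsum fun k => mul_le_mul_right (by exact_mod_cast h k) _

lemma eNorm_mono {m : ℕ → ℕ → ℂ} {p : ℝ} (hp : 1 ≤ p) {x y : ℕ → ℂ}
    (h : ∀ k, ‖x k‖₊ ≤ ‖y k‖₊) : eNorm m p x ≤ eNorm m p y := by
  have hp0 : (0:ℝ) ≤ p := zero_le_one.trans hp
  refine ENNReal.rpow_le_rpow (ENNReal.tsum_le_tsum fun n =>
    ENNReal.rpow_le_rpow (Fn_mono h n) hp0) (one_div_nonneg.mpr hp0)

lemma eNorm_zero {m : ℕ → ℕ → ℂ} {p : ℝ} (hp : 1 ≤ p) : eNorm m p 0 = 0 := by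
  have hp0 : (0:ℝ) < p := lt_of_lt_of_le one_pos hp
  have h : ∀ n, Fn m (0 : ℕ → ℂ) n = 0 := by intro n; simp [Fn]
  rw [eNorm_def]
  simp only [h, ENNReal.zero_rpow_of_pos hp0, tsum_zero]
  exact ENNReal.zero_rpow_of_pos (one_div_pos.mpr hp0)

lemma eNorm_add_le (m : ℕ → ℕ → ℂ) {p : ℝ} (hp : 1 ≤ p) (x y : ℕ → ℂ) :
    eNorm m p (x + y) ≤ eNorm m p x + eNorm m p y := by
  have hp0 : (0:ℝ) ≤ p := zero_le_one.trans hp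
  have h1 : eNorm m p (x + y) ≤ (∑' n : ℕ, (Fn m x n + Fn m y n) ^ p) ^ (1/p) := by
    rw [eNorm_def]
    refine ENNReal.rpow_le_rpow (ENNReal.tsum_le_tsum fun n =>
      ENNReal.rpow_le_rpow ?_ hp0) (one_div_nonneg.mpr hp0)
    calc Fn m (x + y) n
        ≤ ∑' k : ℕ, ((‖m n k‖₊ : ℝ≥0∞) * ‖x k‖₊ + (‖m n k‖₊ : ℝ≥0∞) * ‖y k‖₊) := by
          refine ENNReal.tsum_le_tsum fun k => ?_
          rw [← mul_add]
          refine mul_le_mul_right ?_ _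
          have := nnnorm_add_le (x k) (y k)
          exact_mod_cast this
      _ = Fn m x n + Fn m y n := ENNReal.tsum_add
  refine h1.trans ?_
  have key := ENNReal.lintegral_Lp_add_le (μ := (Measure.count : Measure ℕ))
    (f := Fn m x) (g := Fn m y)
    (measurable_of_countable _).aemeasurable (measurable_of_countable _).aemeasurable hp
  simpa [lintegral_count, eNorm_def, Pi.add_apply] using key

/-- The `ℓᵖ`-norm of the `k`-th column. -/
noncomputable def colNorm (m : ℕ → ℕ → ℂ) (p : ℝ) (k : ℕ) : ℝ≥0∞ :=
  (∑' n : ℕ, (‖m n k‖₊ : ℝ≥0∞) ^ p) ^ (1 / p)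

lemma col_calc (m : ℕ → ℕ → ℂ) {p : ℝ} (hp : 1 ≤ p) (k : ℕ) (c : ℝ≥0∞) :
    (∑' n : ℕ, ((‖m n k‖₊ : ℝ≥0∞) * c) ^ p) ^ (1/p) = c * colNorm m p k := by
  have hp0 : (0:ℝ) < p := lt_of_lt_of_le one_pos hp
  have h : ∀ n, ((‖m n k‖₊ : ℝ≥0∞) * c) ^ p = (‖m n k‖₊ : ℝ≥0∞) ^ p * c ^ p :=
    fun n => ENNReal.mul_rpow_of_nonneg _ _ hp0.le
  simp_rw [h]
  rw [ENNReal.tsum_mul_right, ENNReal.mul_rpow_of_nonneg _ _ (one_div_nonneg.mpr hp0.le),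
    ← ENNReal.rpow_mul, mul_one_div_cancel hp0.ne', ENNReal.rpow_one, mul_comm, colNorm]

lemma eNorm_single (m : ℕ → ℕ → ℂ) {p : ℝ} (hp : 1 ≤ p) (k : ℕ) (c : ℂ) :
    eNorm m p (fun j => if j = k then c else 0) = (‖c‖₊ : ℝ≥0∞) * colNorm m p k := by
  have h : ∀ n, Fn m (fun j => if j = k then c else 0) n = (‖m n k‖₊ : ℝ≥0∞) * ‖c‖₊ := by
    intro n
    have : ∀ j, (‖m n j‖₊ : ℝ≥0∞) * (‖if j = k then c else 0‖₊ : ℝ≥0∞)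
        = if j = k then (‖m n k‖₊ : ℝ≥0∞) * ‖c‖₊ else 0 := by
      intro j
      by_cases hj : j = k
      · subst hj; simp
      · simp [hj]
    rw [Fn]
    simp_rw [this]
    exact tsum_ite_eq k _
  rw [eNorm_def]
  simp_rw [h]
  exact col_calc m hp k _

lemma single_le (m : ℕ → ℕ → ℂ) {p : ℝ} (hp : 1 ≤ p) (x : ℕ → ℂ) (k : ℕ) :
    (‖x k‖₊ : ℝ≥0∞) * colNorm m p k ≤ eNorm m p x := by
  have hp0 : (0:ℝ) ≤ p := zero_le_one.trans hp
  rw [← col_calc m hp k]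
  rw [eNorm_def]
  refine ENNReal.rpow_le_rpow (ENNReal.tsum_le_tsum fun n =>
    ENNReal.rpow_le_rpow ?_ hp0) (one_div_nonneg.mpr (lt_of_lt_of_le one_pos hp).le)
  exact ENNReal.le_tsum k

lemma eNorm_sum_le (m : ℕ → ℕ → ℂ) {p : ℝ} (hp : 1 ≤ p) (s : Finset ℕ) (f : ℕ → ℕ → ℂ) :
    eNorm m p (∑ k ∈ s, f k) ≤ ∑ k ∈ s, eNorm m p (f k) := by
  classical
  induction s using Finset.cons_induction with
  | empty => simp [eNorm_zero hp]
  | cons a s ha ih =>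
    rw [Finset.sum_cons, Finset.sum_cons]
    exact (eNorm_add_le m hp _ _).trans (add_le_add_right ih _)

lemma eNorm_le_sum_single (m : ℕ → ℕ → ℂ) {p : ℝ} (hp : 1 ≤ p) (y : ℕ → ℂ) (N : ℕ)
    (hy : ∀ k, N ≤ k → y k = 0) :
    eNorm m p y ≤ ∑ k ∈ Finset.range N, (‖y k‖₊ : ℝ≥0∞) * colNorm m p k := by
  classical
  have hrepr : y = ∑ k ∈ Finset.range N, (fun j => if j = k then y k else 0) := by
    funext j
    rw [Finset.sum_apply]
    rw [Finset.sum_ite_eq (Finset.range N) j y]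
    by_cases hj : j ∈ Finset.range N
    · simp [hj]
    · simp only [hj, if_false]
      exact hy j (by simpa using hj)
  calc eNorm m p y = eNorm m p (∑ k ∈ Finset.range N, (fun j => if j = k then y k else 0)) := by
        rw [← hrepr]
    _ ≤ ∑ k ∈ Finset.range N, eNorm m p (fun j => if j = k then y k else 0) :=
        eNorm_sum_le m hp _ _
    _ = ∑ k ∈ Finset.range N, (‖y k‖₊ : ℝ≥0∞) * colNorm m p k := by
        refine Finset.sum_congr rfl fun k _ => eNorm_single m hp k (y k)

/-- Truncation to the first `N` coordinates. -/
noncomputable def trunc (x : ℕ → ℂ) (N : ℕ) : ℕ → ℂ := fun k => if k < N then x k else 0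

lemma sub_trunc (x : ℕ → ℂ) (N k : ℕ) : (x - trunc x N) k = if k < N then 0 else x k := by
  by_cases h : k < N <;> simp [trunc, h]

lemma tail_tsum (f : ℕ → ℝ≥0∞) (N : ℕ) :
    ∑' k : ℕ, (if k < N then 0 else f k) = ∑' k : ℕ, f (k + N) := by
  have h := (add_left_injective N).tsum_eq (f := fun k => if k < N then 0 else f k) ?_
  · rw [← h]
    refine tsum_congr fun k => ?_
    simp [Nat.not_lt.mpr (Nat.le_add_left N k)]
  · intro y hy
    simp only [Function.mem_support] at hy
    have hyN : N ≤ y := by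
      by_contra hc
      exact hy (by simp [Nat.lt_of_not_le hc])
    exact ⟨y - N, by simpa using Nat.sub_add_cancel hyN⟩

lemma tendsto_tail (m : ℕ → ℕ → ℂ) {p : ℝ} (hp : 1 ≤ p) (x : ℕ → ℂ)
    (hx : eNorm m p x < ∞) :
    Tendsto (fun N => ∑' n : ℕ, Fn m (x - trunc x N) n ^ p) atTop (𝓝 0) := by
  have hp0 : (0:ℝ) < p := lt_of_lt_of_le one_pos hp
  have hS : ∑' n : ℕ, Fn m x n ^ p < ∞ := by
    have h1 : ((∑' n : ℕ, Fn m x n ^ p) ^ (1/p)) ^ p < ∞ :=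
      ENNReal.rpow_lt_top_of_nonneg hp0.le (by rw [← eNorm_def]; exact hx.ne)
    rwa [← ENNReal.rpow_mul, one_div_mul_cancel hp0.ne', ENNReal.rpow_one] at h1
  have hFx : ∀ n, Fn m x n ≠ ∞ := by
    intro n hcon
    have h1 : Fn m x n ^ p ≤ ∑' n : ℕ, Fn m x n ^ p := ENNReal.le_tsum n
    rw [hcon, ENNReal.top_rpow_of_pos hp0] at h1
    exact hS.not_ge h1
  -- pointwise convergence of each row tail
  have hrow : ∀ n, Tendsto (fun N => Fn m (x - trunc x N) n) atTop (𝓝 0) := by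
    intro n
    have hident : ∀ N, Fn m (x - trunc x N) n
        = ∑' k : ℕ, (‖m n (k + N)‖₊ : ℝ≥0∞) * ‖x (k + N)‖₊ := by
      intro N
      have hg : ∀ k, (‖m n k‖₊ : ℝ≥0∞) * (‖(x - trunc x N) k‖₊ : ℝ≥0∞)
          = if k < N then 0 else (‖m n k‖₊ : ℝ≥0∞) * ‖x k‖₊ := by
        intro k
        rw [sub_trunc]
        by_cases h : k < N <;> simp [h]
      calc Fn m (x - trunc x N) n
          = ∑' k : ℕ, (if k < N then 0 else (‖m n k‖₊ : ℝ≥0∞) * ‖x k‖₊) := tsum_congr hg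
        _ = ∑' k : ℕ, (‖m n (k + N)‖₊ : ℝ≥0∞) * ‖x (k + N)‖₊ :=
            tail_tsum (fun k => (‖m n k‖₊ : ℝ≥0∞) * ‖x k‖₊) N
    simp_rw [hident]
    exact ENNReal.tendsto_sum_nat_add _ (hFx n)
  -- raise to power p
  have hrowp : ∀ n, Tendsto (fun N => Fn m (x - trunc x N) n ^ p) atTop (𝓝 0) := by
    intro n
    rw [ENNReal.tendsto_nhds_zero]
    intro ε hε
    have hδ : 0 < ε ^ (1/p) := ENNReal.rpow_pos_of_nonneg hε (one_div_nonneg.mpr hp0.le)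
    filter_upwards [ENNReal.tendsto_nhds_zero.mp (hrow n) _ hδ] with N hN
    calc Fn m (x - trunc x N) n ^ p ≤ (ε ^ (1/p)) ^ p := ENNReal.rpow_le_rpow hN hp0.le
      _ = ε := by rw [← ENNReal.rpow_mul, one_div_mul_cancel hp0.ne', ENNReal.rpow_one]
  -- dominated convergence
  have key := MeasureTheory.tendsto_lintegral_of_dominated_convergence
    (μ := (Measure.count : Measure ℕ))
    (F := fun N n => Fn m (x - trunc x N) n ^ p) (f := fun _ => 0)
    (bound := fun n => Fn m x n ^ p)
    (fun N => measurable_of_countable _)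
    (fun N => Eventually.of_forall fun n => by
      refine ENNReal.rpow_le_rpow (Fn_mono (fun k => ?_) n) hp0.le
      rw [show (x - trunc x N) k = if k < N then 0 else x k from sub_trunc x N k]
      by_cases h : k < N <;> simp [h])
    (by rw [lintegral_count]; exact hS.ne)
    (Eventually.of_forall hrowp)
  simpa [lintegral_count] using key

end Stmt2Aux

open Stmt2Aux

/-- `(ℓ^p_M, ‖·‖_{M,p})` is separable: there is a countable subset of `ℓ^p_M`
which is dense in `ℓ^p_M` for the norm `‖·‖_{M,p}`. -/
theorem stmt2 (m : ℕ → ℕ → ℂ) (p : ℝ) (hp : 1 ≤ p)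
    (hcol : ∀ k : ℕ, ∃ n : ℕ, m n k ≠ 0) :
    ∃ D : Set (ℕ → ℂ), D.Countable ∧ (∀ d ∈ D, eNorm m p d < ∞) ∧
      ∀ x : ℕ → ℂ, eNorm m p x < ∞ → ∀ ε : ℝ≥0∞, 0 < ε →
        ∃ d ∈ D, eNorm m p (x - d) < ε := by
  classical
  have hp0 : (0:ℝ) < p := lt_of_lt_of_le one_pos hp
  set φ : (ℕ →₀ ℚ × ℚ) → (ℕ → ℂ) :=
    fun f k => ((f k).1 : ℂ) + ((f k).2 : ℂ) * Complex.I with hφ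
  refine ⟨{d | d ∈ Set.range φ ∧ eNorm m p d < ∞},
    (Set.countable_range φ).mono (fun d hd => hd.1), fun d hd => hd.2, ?_⟩
  intro x hx ε hε
  set ε' : ℝ≥0∞ := min ε 1 with hε'def
  have hε'0 : 0 < ε' := lt_min hε zero_lt_one
  have hε't : ε' ≠ ⊤ := ((min_le_right ε 1).trans_lt ENNReal.one_lt_top).ne
  have hhalf0 : 0 < ε' / 2 := ENNReal.div_pos hε'0.ne' ENNReal.ofNat_ne_top
  have hhalft : ε' / 2 ≠ ⊤ := (ENNReal.div_lt_top hε't two_ne_zero).ne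
  -- Step A: truncate
  obtain ⟨N, hN⟩ := ((tendsto_tail m hp x hx).eventually_lt_const
    (ENNReal.rpow_pos hhalf0 hhalft (p := p))).exists
  have hA : eNorm m p (x - trunc x N) < ε' / 2 := by
    have h1 := ENNReal.rpow_lt_rpow hN (one_div_pos.mpr hp0)
    rwa [← ENNReal.rpow_mul, mul_one_div_cancel hp0.ne', ENNReal.rpow_one, ← eNorm_def] at h1
  -- Step B: rational approximation of the truncation
  set τ : ℝ≥0∞ := (ε' / 2) / (N + 1) with hτdef
  have hτ0 : 0 < τ := ENNReal.div_pos hhalf0.ne' (by simp)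
  have hτt : τ ≠ ⊤ := (ENNReal.div_lt_top hhalft (by simp)).ne
  have hcolfin : ∀ k, x k ≠ 0 → colNorm m p k ≠ ⊤ := by
    intro k hk hcon
    have h1 : (‖x k‖₊ : ℝ≥0∞) * colNorm m p k ≤ eNorm m p x := single_le m hp x k
    rw [hcon, ENNReal.mul_top (by simpa using hk)] at h1
    exact hx.not_ge h1
  have hchoice : ∀ k : ℕ, ∃ q : ℚ × ℚ,
      ((k < N ∧ x k ≠ 0) →
        (‖x k - ((q.1 : ℂ) + (q.2 : ℂ) * Complex.I)‖₊ : ℝ≥0∞) * colNorm m p k < τ) ∧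
      (¬(k < N ∧ x k ≠ 0) → q = 0) := by
    intro k
    by_cases h : k < N ∧ x k ≠ 0
    · set c : ℝ≥0∞ := colNorm m p k with hc
      have hct : c ≠ ⊤ := hcolfin k h.2
      set δe : ℝ≥0∞ := min 1 (τ / (2 * c)) with hδe
      have hδe0 : 0 < δe :=
        lt_min zero_lt_one (ENNReal.div_pos hτ0.ne' (ENNReal.mul_ne_top ENNReal.ofNat_ne_top hct))
      have hδet : δe ≠ ⊤ := ((min_le_left _ _).trans_lt ENNReal.one_lt_top).ne
      have hδ : 0 < δe.toReal := ENNReal.toReal_pos hδe0.ne' hδet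
      obtain ⟨q1, hq1⟩ := exists_rat_near (x k).re (by positivity : (0:ℝ) < δe.toReal / 2)
      obtain ⟨q2, hq2⟩ := exists_rat_near (x k).im (by positivity : (0:ℝ) < δe.toReal / 2)
      refine ⟨(q1, q2), fun _ => ?_, fun hcon => absurd h hcon⟩
      set w : ℂ := (q1 : ℂ) + (q2 : ℂ) * Complex.I with hw
      have hre : (x k - w).re = (x k).re - (q1 : ℝ) := by simp [hw]
      have him : (x k - w).im = (x k).im - (q2 : ℝ) := by simp [hw]
      have hnorm : ‖x k - w‖ < δe.toReal := by
        calc ‖x k - w‖ ≤ |(x k - w).re| + |(x k - w).im| :=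
              Complex.norm_le_abs_re_add_abs_im _
          _ < δe.toReal / 2 + δe.toReal / 2 := by
              rw [hre, him]; exact add_lt_add hq1 hq2
          _ = δe.toReal := by ring
      have hlt : (‖x k - w‖₊ : ℝ≥0∞) < δe := by
        rw [← enorm_eq_nnnorm, ← ofReal_norm, ← ENNReal.ofReal_toReal hδet]
        exact (ENNReal.ofReal_lt_ofReal_iff hδ).mpr hnorm
      by_cases hc0 : c = 0
      · calc (‖x k - w‖₊ : ℝ≥0∞) * c = 0 := by rw [hc0, mul_zero]
          _ < τ := hτ0
      · have hcc : c⁻¹ * c = 1 := ENNReal.inv_mul_cancel hc0 hct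
        calc (‖x k - w‖₊ : ℝ≥0∞) * c ≤ δe * c := mul_le_mul_left hlt.le c
          _ ≤ (τ / (2 * c)) * c := mul_le_mul_left (min_le_right _ _) c
          _ = τ / 2 := by
              rw [div_eq_mul_inv, ENNReal.mul_inv (Or.inl two_ne_zero) (Or.inl ENNReal.ofNat_ne_top),
                mul_assoc, mul_assoc, hcc, mul_one, ← div_eq_mul_inv]
          _ < τ := ENNReal.half_lt_self hτ0.ne' hτt
    · exact ⟨0, fun hcon => absurd hcon h, fun _ => rfl⟩
  choose q hq1 hq2 using hchoice
  have hqsupp : ∀ k, q k ≠ 0 → k ∈ Finset.range N := by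
    intro k hk
    by_contra hcon
    exact hk (hq2 k (fun hh => hcon (Finset.mem_range.mpr hh.1)))
  set d : ℕ → ℂ := φ (Finsupp.onFinset (Finset.range N) q hqsupp) with hd
  have hdk : ∀ k, d k = ((q k).1 : ℂ) + ((q k).2 : ℂ) * Complex.I := by
    intro k; simp [hd, hφ, Finsupp.onFinset_apply]
  have hdzero : ∀ k, ¬(k < N ∧ x k ≠ 0) → d k = 0 := by
    intro k hk
    rw [hdk k, hq2 k hk]
    simp
  have hdapprox : ∀ k, k < N → x k ≠ 0 →
      (‖x k - d k‖₊ : ℝ≥0∞) * colNorm m p k < τ := by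
    intro k h1 h2
    rw [hdk k]
    exact hq1 k ⟨h1, h2⟩
  -- the term bound for trunc x N - d
  have hterm : ∀ k ∈ Finset.range N,
      (‖(trunc x N - d) k‖₊ : ℝ≥0∞) * colNorm m p k ≤ τ := by
    intro k hk
    have hkN : k < N := Finset.mem_range.mp hk
    by_cases hxk : x k = 0
    · have : (trunc x N - d) k = 0 := by
        have hd0 : d k = 0 := hdzero k (fun hh => hh.2 hxk)
        simp [trunc, hkN, hxk, hd0]
      simp [this]
    · have : (trunc x N - d) k = x k - d k := by simp [trunc, hkN]
      rw [this]
      exact (hdapprox k hkN hxk).le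
  have hBsupp : ∀ k, N ≤ k → (trunc x N - d) k = 0 := by
    intro k hk
    have hd0 : d k = 0 := hdzero k (fun hh => (Nat.not_lt.mpr hk) hh.1)
    simp [trunc, Nat.not_lt.mpr hk, hd0]
  have hB : eNorm m p (trunc x N - d) ≤ ε' / 2 := by
    calc eNorm m p (trunc x N - d)
        ≤ ∑ k ∈ Finset.range N, (‖(trunc x N - d) k‖₊ : ℝ≥0∞) * colNorm m p k :=
          eNorm_le_sum_single m hp _ N hBsupp
      _ ≤ ∑ _k ∈ Finset.range N, τ := Finset.sum_le_sum hterm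
      _ = (N : ℝ≥0∞) * τ := by simp [mul_comm]
      _ ≤ ((N : ℝ≥0∞) + 1) * τ := mul_le_mul_left (le_add_of_nonneg_right zero_le_one) τ
      _ = ε' / 2 := by
          rw [hτdef]
          exact ENNReal.mul_div_cancel' (by simp) (by simp)
  -- d has finite norm
  have hdfin : eNorm m p d < ∞ := by
    have hdsupp : ∀ k, N ≤ k → d k = 0 := fun k hk =>
      hdzero k (fun hh => (Nat.not_lt.mpr hk) hh.1)
    refine lt_of_le_of_lt (eNorm_le_sum_single m hp d N hdsupp) ?_
    refine ENNReal.sum_lt_top.mpr fun k hk => ?_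
    by_cases hxk : x k = 0
    · have hd0 : d k = 0 := hdzero k (fun hh => hh.2 hxk)
      simp [hd0]
    · exact ENNReal.mul_lt_top ENNReal.coe_lt_top (hcolfin k hxk).lt_top
  refine ⟨d, ⟨⟨_, rfl⟩, hdfin⟩, ?_⟩
  have hsplit : x - d = (x - trunc x N) + (trunc x N - d) := by
    funext k; simp
  calc eNorm m p (x - d)
      ≤ eNorm m p (x - trunc x N) + eNorm m p (trunc x N - d) := by
        rw [hsplit]; exact eNorm_add_le m hp _ _
    _ ≤ eNorm m p (x - trunc x N) + ε' / 2 := add_le_add_right hB _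
    _ < ε' / 2 + ε' / 2 := ENNReal.add_lt_add_right hhalft hA
    _ = ε' := ENNReal.add_halves ε'
    _ ≤ ε := min_le_left _ _
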